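/- For a terminal pair (C, L) — a tree-like rational nodal curve whose positive-degree part C_+ and negative-degree part C_- are disjoint — with C_+ having k connected components, h^0(C, L) = (∑_{i∈I_+} d_i) + k. -/

import Mathlib

open scoped BigOperators

/-- Evaluation of a binary form with `n` coefficients (degree `n - 1`) at the point `(a, b)`,
as a linear functional on the coefficient space. -/
noncomputable def evalForm (n : ℕ) (a b : ℂ) : (Fin n → ℂ) →ₗ[ℂ] ℂ :=
  ∑ i : Fin n, (a ^ (i : ℕ) * b ^ (n - 1 - (i : ℕ))) • LinearMap.proj i

/-- The gluing condition at a node joining components `i` and `j`, with node coordinates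
`p` on component `i` and `q` on component `j`. -/
noncomputable def glueCond {I : Type*} (m : I → ℕ) (i j : I) (p q : ℂ × ℂ) :
    (∀ k, Fin (m k) → ℂ) →ₗ[ℂ] ℂ :=
  (evalForm (m i) p.1 p.2).comp
      (LinearMap.proj i : (∀ k, Fin (m k) → ℂ) →ₗ[ℂ] (Fin (m i) → ℂ)) -
    (evalForm (m j) q.1 q.2).comp
      (LinearMap.proj j : (∀ k, Fin (m k) → ℂ) →ₗ[ℂ] (Fin (m j) → ℂ))

/-- The space of global sections of a line bundle on a nodal curve with rational components:
the dual graph is `G`, component `i` carries sections with `m i` coefficients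
(i.e. degree `m i - 1`), and for each edge the sections agree at the node. -/
noncomputable def nodalSections {I : Type*} (G : SimpleGraph I) (m : I → ℕ)
    (node : ∀ i j, G.Adj i j → ℂ × ℂ) : Submodule ℂ (∀ k, Fin (m k) → ℂ) :=
  ⨅ (i) (j) (h : G.Adj i j),
    LinearMap.ker (glueCond m i j (node i j h) (node j i h.symm))

/-- The nodes are genuine points of `ℙ¹` (nonzero coordinates) and the nodes lying on one
and the same component are pairwise distinct as points of `ℙ¹`. -/
def NodesOk {I : Type*} (G : SimpleGraph I) (node : ∀ i j, G.Adj i j → ℂ × ℂ) : Prop :=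
  (∀ i j (h : G.Adj i j), node i j h ≠ 0) ∧
    ∀ i j j' (h : G.Adj i j) (h' : G.Adj i j'), j ≠ j' →
      (node i j h).1 * (node i j' h').2 ≠ (node i j' h').1 * (node i j h).2

/-- The number of nodes joining component `i` to components of negative degree. -/
def eNeg {I : Type*} [Fintype I] (G : SimpleGraph I) [DecidableRel G.Adj]
    (d : I → ℤ) (i : I) : ℕ :=
  (Finset.univ.filter fun j => G.Adj i j ∧ d j < 0).card


open SimpleGraph


lemma exists_leaf {I : Type} [Fintype I] {H : SimpleGraph I} (hH : H.IsAcyclic)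
    {a b : I} (hab : H.Adj a b) :
    ∃ v u, H.Adj v u ∧ ∀ w, H.Adj v w → w = u := by
  classical
  set S : Finset ℕ := (Finset.range (Fintype.card I + 1)).filter
    (fun n => ∃ (x : I) (y : I) (p : H.Walk x y), p.IsPath ∧ p.length = n) with hS
  have hmem : ∀ {x y : I} (p : H.Walk x y), p.IsPath → p.length ∈ S := by
    intro x y p hp
    simp only [hS, Finset.mem_filter, Finset.mem_range]
    exact ⟨by have := hp.length_lt; omega, x, y, p, hp, rfl⟩
  have h1 : (1 : ℕ) ∈ S := by
    have : (SimpleGraph.Walk.cons hab .nil).IsPath := by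
      simp [SimpleGraph.Walk.cons_isPath_iff, hab.ne]
    simpa using hmem _ this
  have hne : S.Nonempty := ⟨1, h1⟩
  set N := S.max' hne with hN
  have hNmem := S.max'_mem hne
  have hNmax : ∀ n ∈ S, n ≤ N := fun n hn => S.le_max' n hn
  rw [← hN] at hNmem
  simp only [hS, Finset.mem_filter, Finset.mem_range] at hNmem
  obtain ⟨-, x, v, p, hp, hplen⟩ := hNmem
  have hN1 : 1 ≤ N := hNmax 1 h1
  -- r : walk from v to x, a path of length N
  set r : H.Walk v x := p.reverse with hr
  have hrp : r.IsPath := hp.reverse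
  have hrlen : r.length = N := by simp [hr, hplen]
  cases hr' : r with
  | nil => rw [hr'] at hrlen; simp at hrlen; omega
  | @cons _ u _ huv r' =>
    rw [hr'] at hrp
    rw [SimpleGraph.Walk.cons_isPath_iff] at hrp
    obtain ⟨hr'p, hvns⟩ := hrp
    refine ⟨v, u, huv, fun w hw => ?_⟩
    by_contra hne'
    have hwsupp : w ∈ r.support := by
      by_contra hws
      have hs : (SimpleGraph.Walk.cons hw.symm r).IsPath :=
        (SimpleGraph.Walk.cons_isPath_iff _ _).2 ⟨hr' ▸ (SimpleGraph.Walk.cons_isPath_iff _ _).2 ⟨hr'p, hvns⟩, hws⟩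
      have := hNmax _ (hmem _ hs)
      simp only [SimpleGraph.Walk.length_cons, hrlen] at this
      omega
    rw [hr'] at hwsupp
    rw [SimpleGraph.Walk.support_cons] at hwsupp
    have hwv : w ≠ v := fun h => H.irrefl (h ▸ hw)
    have hw' : w ∈ r'.support := by
      rcases List.mem_cons.mp hwsupp with h | h
      · exact absurd h hwv
      · exact h
    set t := r'.takeUntil w hw' with ht
    have htp : t.IsPath := hr'p.takeUntil hw'
    have hvnt : v ∉ t.support := fun h => hvns (SimpleGraph.Walk.support_takeUntil_subset _ hw' h)
    have hpp : (SimpleGraph.Walk.cons huv t).IsPath :=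
      (SimpleGraph.Walk.cons_isPath_iff _ _).2 ⟨htp, hvnt⟩
    have hcyc : (SimpleGraph.Walk.cons hw.symm (SimpleGraph.Walk.cons huv t)).IsCycle := by
      rw [SimpleGraph.Walk.cons_isCycle_iff]
      refine ⟨hpp, ?_⟩
      simp only [SimpleGraph.Walk.edges_cons, List.mem_cons]
      rintro (h | h)
      · rw [Sym2.eq_iff] at h
        rcases h with ⟨h1, h2⟩ | ⟨h1, h2⟩
        · exact hwv h1
        · exact hne' h1
      · exact hvnt (SimpleGraph.Walk.snd_mem_support_of_mem_edges t h)
    exact hH _ hcyc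


section CompCount
variable {I : Type} {H : SimpleGraph I} {v u : I}

lemma isolated_not_adj (hleaf : ∀ w, H.Adj v w → w = u) (w : I) :
    ¬ (H.deleteEdges {s(v,u)}).Adj v w := by
  intro h
  rw [deleteEdges_adj] at h
  exact h.2 (by rw [hleaf w h.1]; exact Set.mem_singleton _)

lemma isolated_reach (hleaf : ∀ w, H.Adj v w → w = u) {y : I}
    (h : (H.deleteEdges {s(v,u)}).Reachable v y) : y = v := by
  obtain ⟨p⟩ := h
  cases p with
  | nil => rfl
  | cons h' _ => exact absurd h' (isolated_not_adj hleaf _)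

lemma reach_deleteEdge (hvu : H.Adj v u) (hleaf : ∀ w, H.Adj v w → w = u) {x y : I}
    (h : H.Reachable x y) :
    (H.deleteEdges {s(v,u)}).Reachable x y
      ∨ (x = v ∧ (H.deleteEdges {s(v,u)}).Reachable u y)
      ∨ (y = v ∧ (H.deleteEdges {s(v,u)}).Reachable x u) := by
  set H' := H.deleteEdges {s(v,u)} with hH'
  obtain ⟨p⟩ := h
  induction p with
  | nil => exact Or.inl (Reachable.refl _)
  | @cons a b c hab q ih =>
    by_cases he : s(a, b) = s(v, u)
    · rw [Sym2.eq_iff] at he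
      rcases he with ⟨ha, hb⟩ | ⟨ha, hb⟩
      · subst ha; subst hb
        rcases ih with h | ⟨h1, h2⟩ | ⟨h1, h2⟩
        · exact Or.inr (Or.inl ⟨rfl, h⟩)
        · exact absurd h1 hvu.ne'
        · subst h1; exact Or.inl (Reachable.refl _)
      · subst ha; subst hb
        rcases ih with h | ⟨h1, h2⟩ | ⟨h1, h2⟩
        · have h3 := isolated_reach hleaf h
          subst h3
          exact Or.inr (Or.inr ⟨rfl, Reachable.refl _⟩)
        · exact Or.inl h2
        · exact absurd (isolated_reach hleaf h2) hvu.ne'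
    · have hab' : H'.Adj a b := by
        rw [hH', deleteEdges_adj]
        exact ⟨hab, by simpa using he⟩
      have hbv : b ≠ v := by
        rintro rfl
        exact isolated_not_adj hleaf a hab'.symm
      rcases ih with h | ⟨h1, h2⟩ | ⟨h1, h2⟩
      · exact Or.inl (hab'.reachable.trans h)
      · exact absurd h1 hbv
      · exact Or.inr (Or.inr ⟨h1, hab'.reachable.trans h2⟩)

lemma card_cc_deleteEdge [Fintype I] (hvu : H.Adj v u) (hleaf : ∀ w, H.Adj v w → w = u) :
    Nat.card (H.deleteEdges {s(v,u)}).ConnectedComponent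
      = Nat.card H.ConnectedComponent + 1 := by
  classical
  set H' := H.deleteEdges {s(v,u)} with hH'
  set cv := H'.connectedComponentMk v with hcv
  set f : H'.ConnectedComponent → H.ConnectedComponent :=
    ConnectedComponent.map (Hom.ofLE (deleteEdges_le _)) with hf
  have hfm : ∀ x : I, f (H'.connectedComponentMk x) = H.connectedComponentMk x := fun x => rfl
  have hbij : Function.Bijective
      (fun c : {c : H'.ConnectedComponent // c ≠ cv} => f c.1) := by
    constructor
    · rintro ⟨c, hc⟩ ⟨c', hc'⟩ hcc
      obtain ⟨x, rfl⟩ := c.exists_rep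
      obtain ⟨y, rfl⟩ := c'.exists_rep
      have hr : H.Reachable x y := ConnectedComponent.eq.mp hcc
      rcases reach_deleteEdge hvu hleaf hr with h | ⟨h1, h2⟩ | ⟨h1, h2⟩
      · exact Subtype.ext (ConnectedComponent.eq.mpr h)
      · exact absurd (by rw [show x = v from h1]; rfl) hc
      · exact absurd (by rw [show y = v from h1]; rfl) hc'
    · intro D
      obtain ⟨x, rfl⟩ := D.exists_rep
      by_cases hx : H'.connectedComponentMk x = cv
      · have hxv : x = v := (isolated_reach hleaf (ConnectedComponent.eq.mp hx).symm)
        refine ⟨⟨H'.connectedComponentMk u, fun h => ?_⟩, ?_⟩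
        · exact hvu.ne (isolated_reach hleaf (ConnectedComponent.eq.mp h).symm).symm
        · show H.connectedComponentMk u = _
          rw [hxv]
          exact ConnectedComponent.eq.mpr hvu.symm.reachable
      · exact ⟨⟨H'.connectedComponentMk x, hx⟩, rfl⟩
  have : Nonempty (H.ConnectedComponent ≃ {c : H'.ConnectedComponent // c ≠ cv}) :=
    ⟨(Equiv.ofBijective _ hbij).symm⟩
  have hcard : Nat.card H.ConnectedComponent = Nat.card {c : H'.ConnectedComponent // c ≠ cv} :=
    Nat.card_congr this.some
  have : Finite H'.ConnectedComponent := Quot.finite _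
  cases nonempty_fintype H'.ConnectedComponent
  rw [hcard, Nat.card_eq_fintype_card, Nat.card_eq_fintype_card,
    Fintype.card_subtype_compl (fun c => c = cv), Fintype.card_subtype_eq]
  have hpos : 0 < Fintype.card H'.ConnectedComponent := Fintype.card_pos_iff.mpr ⟨cv⟩
  omega

end CompCount


lemma acyclic_anti {I : Type} {G H : SimpleGraph I} (hle : H ≤ G) (hG : G.IsAcyclic) :
    H.IsAcyclic := by
  intro v c hc
  exact hG (c.mapLe hle) (hc.mapLe hle)

lemma card_edgeSet_deleteEdges {I : Type} [Fintype I] {H : SimpleGraph I} {v u : I}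
    (hvu : H.Adj v u) :
    Nat.card (H.deleteEdges {s(v,u)}).edgeSet + 1 = Nat.card H.edgeSet := by
  classical
  rw [Nat.card_coe_set_eq, Nat.card_coe_set_eq, edgeSet_deleteEdges]
  have hmem : s(v,u) ∈ H.edgeSet := hvu
  rw [Set.ncard_diff_singleton_of_mem hmem]
  have : 1 ≤ H.edgeSet.ncard := by
    rw [Nat.one_le_iff_ne_zero]
    intro h0
    rw [Set.ncard_eq_zero (Set.toFinite _)] at h0
    simp [h0] at hmem
  omega

lemma bot_cc_card {I : Type} [Fintype I] :
    Nat.card (⊥ : SimpleGraph I).ConnectedComponent = Fintype.card I := by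
  rw [← Nat.card_eq_fintype_card]
  refine Nat.card_congr (Equiv.ofBijective (fun x => (⊥ : SimpleGraph I).connectedComponentMk x) ⟨?_, ?_⟩).symm
  · intro x y h
    exact reachable_bot.mp (ConnectedComponent.eq.mp h)
  · intro c
    exact c.exists_rep

lemma forest_count {I : Type} [Fintype I] :
    ∀ (n : ℕ) (H : SimpleGraph I), H.IsAcyclic → Nat.card H.edgeSet = n →
      n + Nat.card H.ConnectedComponent = Fintype.card I := by
  intro n
  induction n with
  | zero =>
    intro H _ hcard
    rw [Nat.card_coe_set_eq, Set.ncard_eq_zero (Set.toFinite _), edgeSet_eq_empty] at hcard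
    subst hcard
    simpa using bot_cc_card (I := I)
  | succ n ih =>
    intro H hac hcard
    have hne : H.edgeSet.Nonempty := by
      apply Set.nonempty_of_ncard_ne_zero
      rw [← Nat.card_coe_set_eq, hcard]; omega
    obtain ⟨e, he⟩ := hne
    induction e using Sym2.ind with
    | _ a b =>
      obtain ⟨v, u, hvu, hleaf⟩ := exists_leaf hac (H.mem_edgeSet.mp he)
      have hac' : (H.deleteEdges {s(v,u)}).IsAcyclic := acyclic_anti (deleteEdges_le _) hac
      have hcard' : Nat.card (H.deleteEdges {s(v,u)}).edgeSet = n := by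
        have := card_edgeSet_deleteEdges hvu
        omega
      have hih := ih _ hac' hcard'
      have hcc := card_cc_deleteEdge hvu hleaf
      omega

lemma finrank_inf_ker {V : Type*} [AddCommGroup V] [Module ℂ V] [FiniteDimensional ℂ V]
    (W : Submodule ℂ V) (φ : V →ₗ[ℂ] ℂ) {x : V} (hx : x ∈ W) (hφ : φ x ≠ 0) :
    Module.finrank ℂ ↥(W ⊓ LinearMap.ker φ) + 1 = Module.finrank ℂ W := by
  have hr : LinearMap.range (φ.domRestrict W) = ⊤ := by
    rw [LinearMap.range_eq_top]
    intro c
    refine ⟨⟨(c / φ x) • x, W.smul_mem _ hx⟩, ?_⟩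
    rw [LinearMap.domRestrict_apply, map_smul]
    rw [smul_eq_mul, div_mul_cancel₀ _ hφ]
  have h1 := LinearMap.finrank_range_add_finrank_ker (φ.domRestrict W)
  rw [hr, LinearMap.ker_domRestrict] at h1
  have h2 : Submodule.comap W.subtype (LinearMap.ker φ)
      = Submodule.comap W.subtype (W ⊓ LinearMap.ker φ) := by
    rw [Submodule.comap_inf, Submodule.comap_subtype_self, top_inf_eq]
  rw [h2, (Submodule.comapSubtypeEquivOfLe (inf_le_left :
      W ⊓ LinearMap.ker φ ≤ W)).finrank_eq] at h1
  simp only [finrank_top, Module.finrank_self] at h1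
  omega

lemma evalForm_apply (n : ℕ) (a b : ℂ) (x : Fin n → ℂ) :
    evalForm n a b x = ∑ i : Fin n, (a ^ (i:ℕ) * b ^ (n - 1 - (i:ℕ))) * x i := by
  simp [evalForm]

lemma evalForm_zero {n : ℕ} (hn : n = 0) (a b : ℂ) (x : Fin n → ℂ) :
    evalForm n a b x = 0 := by
  subst hn
  simp [evalForm_apply]

lemma evalForm_single (n : ℕ) (a b : ℂ) (i : Fin n) :
    evalForm n a b (Pi.single i 1) = a ^ (i:ℕ) * b ^ (n - 1 - (i:ℕ)) := by
  rw [evalForm_apply, Finset.sum_eq_single i]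
  · simp
  · intro j _ hj
    simp [Pi.single_eq_of_ne hj]
  · simp

lemma evalForm_exists {n : ℕ} (hn : 1 ≤ n) {p : ℂ × ℂ} (hp : p ≠ 0) :
    ∃ xv : Fin n → ℂ, evalForm n p.1 p.2 xv ≠ 0 := by
  rcases eq_or_ne p.1 0 with h1 | h1
  · have h2 : p.2 ≠ 0 := fun h2 => hp (Prod.ext h1 h2)
    refine ⟨Pi.single ⟨0, by omega⟩ 1, ?_⟩
    rw [evalForm_single]
    simpa using pow_ne_zero _ h2
  · refine ⟨Pi.single ⟨n - 1, by omega⟩ 1, ?_⟩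
    rw [evalForm_single]
    simp only [Nat.sub_self, pow_zero, mul_one]
    exact pow_ne_zero _ h1

lemma glueCond_apply {I : Type*} (m : I → ℕ) (i j : I) (p q : ℂ × ℂ)
    (x : ∀ k, Fin (m k) → ℂ) :
    glueCond m i j p q x = evalForm (m i) p.1 p.2 (x i) - evalForm (m j) q.1 q.2 (x j) := rfl

lemma ker_glueCond_symm {I : Type*} (m : I → ℕ) (i j : I) (p q : ℂ × ℂ) :
    LinearMap.ker (glueCond m j i q p) = LinearMap.ker (glueCond m i j p q) := by
  ext x
  simp only [LinearMap.mem_ker, glueCond_apply, sub_eq_zero]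
  exact eq_comm

lemma dim_lemma {I : Type} [Fintype I] [DecidableEq I] (m : I → ℕ) :
    ∀ (n : ℕ) (H : SimpleGraph I) (node : ∀ i j, H.Adj i j → ℂ × ℂ),
      H.IsAcyclic → Nat.card H.edgeSet = n →
      (∀ i j (h : H.Adj i j), node i j h ≠ 0) →
      (∀ i j, H.Adj i j → 1 ≤ m i) →
      Module.finrank ℂ ↥(⨅ (i) (j) (h : H.Adj i j),
          LinearMap.ker (glueCond m i j (node i j h) (node j i h.symm))) + n
        = ∑ i, m i := by
  intro n
  induction n with
  | zero =>
    intro H node hac hcard hnz hm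
    have hbot : ∀ i j, ¬ H.Adj i j := by
      rw [Nat.card_coe_set_eq, Set.ncard_eq_zero (Set.toFinite _),
        edgeSet_eq_empty] at hcard
      subst hcard
      exact fun i j h => h
    have htop : (⨅ (i) (j) (h : H.Adj i j),
        LinearMap.ker (glueCond m i j (node i j h) (node j i h.symm))) = ⊤ := by
      rw [eq_top_iff]
      exact le_iInf fun i => le_iInf fun j => le_iInf fun h => absurd h (hbot i j)
    rw [htop, finrank_top, Module.finrank_pi_fintype]
    simp
  | succ n ih =>
    intro H node hac hcard hnz hm
    have hne : H.edgeSet.Nonempty := by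
      apply Set.nonempty_of_ncard_ne_zero
      rw [← Nat.card_coe_set_eq, hcard]
      omega
    obtain ⟨e, he⟩ := hne
    induction e using Sym2.ind with
    | _ a b =>
      obtain ⟨v, u, hvu, hleaf⟩ := exists_leaf hac (H.mem_edgeSet.mp he)
      have hle : H.deleteEdges {s(v,u)} ≤ H := deleteEdges_le _
      set node' : ∀ i j, (H.deleteEdges {s(v,u)}).Adj i j → ℂ × ℂ :=
        fun i j h => node i j (hle h) with hnode'
      set W' := ⨅ (i) (j) (h : (H.deleteEdges {s(v,u)}).Adj i j),
          LinearMap.ker (glueCond m i j (node' i j h) (node' j i h.symm)) with hW'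
      set φ := glueCond m v u (node v u hvu) (node u v hvu.symm) with hφ
      have key : (⨅ (i) (j) (h : H.Adj i j),
          LinearMap.ker (glueCond m i j (node i j h) (node j i h.symm)))
          = W' ⊓ LinearMap.ker φ := by
        apply le_antisymm
        · refine le_inf (le_iInf fun i => le_iInf fun j => le_iInf fun h' => ?_)
            (iInf_le_of_le v (iInf_le_of_le u (iInf_le _ hvu)))
          exact iInf_le_of_le i (iInf_le_of_le j (iInf_le _ (hle h')))
        · refine le_iInf fun i => le_iInf fun j => le_iInf fun h => ?_
          by_cases hee : s(i,j) = s(v,u)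
          · rw [Sym2.eq_iff] at hee
            rcases hee with ⟨h1, h2⟩ | ⟨h1, h2⟩
            · subst h1; subst h2
              exact inf_le_right
            · subst h1; subst h2
              exact le_trans inf_le_right
                (le_of_eq (ker_glueCond_symm m _ _ _ _))
          · have h' : (H.deleteEdges {s(v,u)}).Adj i j := by
              rw [deleteEdges_adj]
              exact ⟨h, by simpa using hee⟩
            exact le_trans inf_le_left
              (iInf_le_of_le i (iInf_le_of_le j (iInf_le _ h')))
      obtain ⟨xv, hxv⟩ := evalForm_exists (hm v u hvu) (hnz v u hvu)
      set x : ∀ k, Fin (m k) → ℂ := Pi.single v xv with hx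
      have hxW' : x ∈ W' := by
        rw [hW']
        simp only [Submodule.mem_iInf]
        intro i j h'
        rw [LinearMap.mem_ker, glueCond_apply]
        have hiv : i ≠ v := fun hiv => isolated_not_adj hleaf j (hiv ▸ h')
        have hjv : j ≠ v := fun hjv => isolated_not_adj hleaf i (hjv ▸ h'.symm)
        rw [hx, Pi.single_eq_of_ne hiv, Pi.single_eq_of_ne hjv, map_zero, map_zero,
          sub_zero]
      have hφx : φ x ≠ 0 := by
        rw [hφ, glueCond_apply, hx, Pi.single_eq_same, Pi.single_eq_of_ne hvu.ne',
          map_zero, sub_zero]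
        exact hxv
      have hfin := finrank_inf_ker W' φ hxW' hφx
      have hcard' : Nat.card (H.deleteEdges {s(v,u)}).edgeSet = n := by
        have := card_edgeSet_deleteEdges hvu
        omega
      have hih := ih (H.deleteEdges {s(v,u)}) node'
        (acyclic_anti hle hac) hcard'
        (fun i j h => hnz i j _) (fun i j h => hm i j (hle h))
      rw [key]
      rw [← hW'] at hih
      omega

/-- For a terminal pair -/
theorem statement4 {I : Type} [Fintype I] [DecidableEq I]
    (G : SimpleGraph I) [DecidableRel G.Adj] (hG : G.IsAcyclic) (d : I → ℤ)
    (node : ∀ i j, G.Adj i j → ℂ × ℂ) (hnode : NodesOk G node)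
    (hterm : ∀ i j, G.Adj i j → (0 ≤ d i ↔ 0 ≤ d j)) :
    (Module.finrank ℂ ↥(nodalSections G (fun i => (d i + 1).toNat) node) : ℤ)
      = (∑ i : {i : I // 0 ≤ d i}, d i.1)
        + Nat.card (G.comap (Subtype.val : {i : I // 0 ≤ d i} → I)).ConnectedComponent := by
  classical
  set m : I → ℕ := fun i => (d i + 1).toNat with hm
  set G' : SimpleGraph I :=
    { Adj := fun i j => G.Adj i j ∧ 0 ≤ d i ∧ 0 ≤ d j
      symm := ⟨fun i j h => ⟨h.1.symm, h.2.2, h.2.1⟩⟩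
      loopless := ⟨fun i h => G.irrefl h.1⟩ } with hG'
  have hle' : G' ≤ G := fun i j h => h.1
  set node' : ∀ i j, G'.Adj i j → ℂ × ℂ := fun i j h => node i j h.1 with hnode'
  have hsec : nodalSections G m node = ⨅ (i) (j) (h : G'.Adj i j),
      LinearMap.ker (glueCond m i j (node' i j h) (node' j i h.symm)) := by
    rw [nodalSections]
    apply le_antisymm
    · refine le_iInf fun i => le_iInf fun j => le_iInf fun h => ?_
      exact iInf_le_of_le i (iInf_le_of_le j (iInf_le _ h.1))
    · refine le_iInf fun i => le_iInf fun j => le_iInf fun h => ?_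
      by_cases hdi : 0 ≤ d i
      · have hdj : 0 ≤ d j := (hterm i j h).mp hdi
        exact iInf_le_of_le i (iInf_le_of_le j (iInf_le _ ⟨h, hdi, hdj⟩))
      · have hdj : ¬ 0 ≤ d j := fun hdj => hdi ((hterm i j h).mpr hdj)
        have hk : LinearMap.ker (glueCond m i j (node i j h) (node j i h.symm)) = ⊤ := by
          rw [eq_top_iff]
          intro x _
          rw [LinearMap.mem_ker, glueCond_apply,
            evalForm_zero (by simp only [hm]; omega),
            evalForm_zero (by simp only [hm]; omega), sub_zero]
        rw [hk]
        exact le_top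
  have hdim := dim_lemma m (Nat.card G'.edgeSet) G' node'
    (acyclic_anti hle' hG) rfl (fun i j h => hnode.1 i j h.1)
    (fun i j h => by simp only [hm]; have := h.2.1; omega)
  set Gc := G.comap (Subtype.val : {i : I // 0 ≤ d i} → I) with hGc
  have hGc_ac : Gc.IsAcyclic := by
    intro w c hc
    exact hG _ ((SimpleGraph.Walk.map_isCycle_iff_of_injective
      (f := (SimpleGraph.Embedding.comap (Function.Embedding.subtype _) G).toHom)
      Subtype.val_injective).mpr hc)
  have himg : G'.edgeSet = Sym2.map (Subtype.val : {i : I // 0 ≤ d i} → I) '' Gc.edgeSet := by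
    ext e
    induction e using Sym2.ind with
    | _ x y =>
      simp only [Set.mem_image, SimpleGraph.mem_edgeSet]
      constructor
      · rintro ⟨hxy, hx, hy⟩
        exact ⟨s(⟨x, hx⟩, ⟨y, hy⟩), hxy, by rw [Sym2.map_pair_eq]⟩
      · rintro ⟨e', he', hmap⟩
        obtain ⟨a, b, rfl⟩ : ∃ a b, e' = s(a, b) :=
          Sym2.ind (fun a b => ⟨a, b, rfl⟩) e'
        rw [Sym2.map_pair_eq, Sym2.eq_iff] at hmap
        have hab : G.Adj a.1 b.1 := he'
        rcases hmap with ⟨h1, h2⟩ | ⟨h1, h2⟩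
        · rw [← h1, ← h2]
          exact ⟨hab, a.2, b.2⟩
        · rw [← h1, ← h2]
          exact ⟨hab.symm, b.2, a.2⟩
  have hedge : Nat.card Gc.edgeSet = Nat.card G'.edgeSet := by
    rw [Nat.card_coe_set_eq, Nat.card_coe_set_eq, himg,
      Set.ncard_image_of_injective _ (Sym2.map.injective Subtype.val_injective)]
  have hforest := forest_count (Nat.card Gc.edgeSet) Gc hGc_ac rfl
  have hsum : (∑ i, (m i : ℤ)) = (∑ i : {i : I // 0 ≤ d i}, d i.1)
      + Fintype.card {i : I // 0 ≤ d i} := by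
    rw [← Fintype.sum_subtype_add_sum_subtype (fun i => 0 ≤ d i) (fun i => (m i : ℤ))]
    have h0 : (∑ i : {i : I // ¬ 0 ≤ d i}, (m i.1 : ℤ)) = 0 := by
      apply Finset.sum_eq_zero
      intro i _
      have : ¬ 0 ≤ d i.1 := i.2
      simp only [hm]
      omega
    have h1 : (∑ i : {i : I // 0 ≤ d i}, (m i.1 : ℤ))
        = ∑ i : {i : I // 0 ≤ d i}, (d i.1 + 1) := by
      apply Finset.sum_congr rfl
      intro i _
      have : 0 ≤ d i.1 := i.2
      simp only [hm]
      omega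
    rw [h0, h1, add_zero, Finset.sum_add_distrib]
    simp [Finset.card_univ]
  have hsec2 : nodalSections G (fun i => (d i + 1).toNat) node
      = ⨅ (i) (j) (h : G'.Adj i j),
        LinearMap.ker (glueCond m i j (node' i j h) (node' j i h.symm)) := hsec
  rw [hsec2]
  have hdimZ : (Module.finrank ℂ ↥(⨅ (i) (j) (h : G'.Adj i j),
      LinearMap.ker (glueCond m i j (node' i j h) (node' j i h.symm))) : ℤ)
      + Nat.card G'.edgeSet = ∑ i, (m i : ℤ) := by
    rw [← Nat.cast_sum]
    exact_mod_cast congrArg (Nat.cast : ℕ → ℤ) hdim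
  have hforestZ : (Nat.card Gc.edgeSet : ℤ) + Nat.card Gc.ConnectedComponent
      = Fintype.card {i : I // 0 ≤ d i} := by exact_mod_cast hforest
  have hedgeZ : (Nat.card Gc.edgeSet : ℤ) = Nat.card G'.edgeSet := by exact_mod_cast hedge
  linarith [hdimZ, hforestZ, hedgeZ, hsum]
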